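/- arXiv:1609.09628 — 3 statements merged into one kernel-verified Lean document; each statement's English description precedes it below -/
import Mathlib

section
/- Let L/k be an extension of finite fields. The centralizer of SL_n(k) inside SL_n(L) consists of scalar matrices, i.e. C_{SL_n(L)}(SL_n(k)) ≤ Z(SL_n(L)). -/
open Matrix

/-- For an extension `L/k` of finite fields, the centralizer of `SL_n(k)` inside
`SL_n(L)` is contained in the center of `SL_n(L)`. -/
theorem stmt_3 (k L : Type) [Field k] [Field L] [Fintype k] [Fintype L]
    (f : k →+* L) (n : ℕ)
    (g : Matrix.SpecialLinearGroup (Fin n) L)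
    (hg : ∀ h : Matrix.SpecialLinearGroup (Fin n) k,
      g * Matrix.SpecialLinearGroup.map f h = Matrix.SpecialLinearGroup.map f h * g) :
    g ∈ Subgroup.center (Matrix.SpecialLinearGroup (Fin n) L) := by
  have hcomm : ∀ (i j : Fin n), i ≠ j →
      Commute (single i j (1 : L)) (g : Matrix (Fin n) (Fin n) L) := by
    intro i j hij
    have h := hg ⟨Matrix.transvection i j (1 : k), Matrix.det_transvection_of_ne i j hij 1⟩
    have h' : Commute (Matrix.transvection i j (1 : L)) (g : Matrix (Fin n) (Fin n) L) := by
      have := congrArg (Subtype.val) h.symm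
      simp only [Matrix.SpecialLinearGroup.coe_mul, Matrix.SpecialLinearGroup.map_apply_coe] at this
      have hmap : f.mapMatrix (Matrix.transvection i j (1 : k)) = Matrix.transvection i j (1 : L) := by
        ext a b
        simp [RingHom.mapMatrix_apply, Matrix.map_apply, Matrix.transvection,
          Matrix.single_apply, Matrix.one_apply]
      rw [← hmap]
      exact this
    have : Commute (1 + single i j (1 : L)) (g : Matrix (Fin n) (Fin n) L) := by
      simpa [Matrix.transvection] using h'
    have h2 := this
    unfold Commute SemiconjBy at h2
    rw [add_mul, mul_add, one_mul, mul_one] at h2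
    exact (add_right_injective _ h2)
  obtain ⟨r, hr⟩ := Matrix.mem_range_scalar_of_commute_single
    (fun i j hij => hcomm i j hij)
  rw [Matrix.SpecialLinearGroup.mem_center_iff]
  refine ⟨r, ?_, hr⟩
  have : Matrix.det ((Matrix.scalar (Fin n)) r) = 1 := by rw [hr]; exact g.property
  simpa [Matrix.det_smul] using this
end

section
/- Let L/k be an extension of finite fields, n ≥ 2, and g ∈ SL_n(L) an element normalizing SL_n(k). Then g^n ∈ SL_n(k). -/
/-- For an extension `L/k` of finite fields and `n ≥ 2`, if `g ∈ SL_n(L)` normalizes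
`SL_n(k)` (embedded via `k ⊆ L`), then `g^n ∈ SL_n(k)`. -/
theorem stmt_4 (k L : Type) [Field k] [Field L] [Fintype k] [Fintype L]
    (f : k →+* L) (n : ℕ) (hn : 2 ≤ n)
    (g : Matrix.SpecialLinearGroup (Fin n) L)
    (hg : g ∈ Subgroup.normalizer ((Matrix.SpecialLinearGroup.map (n := Fin n) f).range :
      Set (Matrix.SpecialLinearGroup (Fin n) L))) :
    g ^ n ∈ (Matrix.SpecialLinearGroup.map (n := Fin n) f).range := by
  classical
  set G : Matrix (Fin n) (Fin n) L := ↑g with hGdef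
  set H : Matrix (Fin n) (Fin n) L := ↑(g⁻¹) with hHdef
  have hGH : G * H = 1 := by
    rw [hGdef, hHdef, ← Matrix.SpecialLinearGroup.coe_mul, mul_inv_cancel,
      Matrix.SpecialLinearGroup.coe_one]
  have hHG : H * G = 1 := by
    rw [hGdef, hHdef, ← Matrix.SpecialLinearGroup.coe_mul, inv_mul_cancel,
      Matrix.SpecialLinearGroup.coe_one]
  -- entries of elements of the range lie in `f.range`
  have hment : ∀ x : Matrix.SpecialLinearGroup (Fin n) L,
      x ∈ (Matrix.SpecialLinearGroup.map (n := Fin n) f).range →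
      ∀ a b, (x : Matrix (Fin n) (Fin n) L) a b ∈ f.range := by
    rintro x ⟨y, rfl⟩ a b
    exact ⟨(y : Matrix (Fin n) (Fin n) k) a b, rfl⟩
  -- off-diagonal products
  have hoff : ∀ i j : Fin n, i ≠ j → ∀ a b : Fin n, G a i * H j b ∈ f.range := by
    intro i j hij a b
    set tk : Matrix.SpecialLinearGroup (Fin n) k :=
      ⟨Matrix.transvection i j 1, Matrix.det_transvection_of_ne i j hij 1⟩ with htk
    set tL : Matrix.SpecialLinearGroup (Fin n) L :=
      ⟨Matrix.transvection i j 1, Matrix.det_transvection_of_ne i j hij 1⟩ with htL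
    have hmap : Matrix.SpecialLinearGroup.map (n := Fin n) f tk = tL := by
      apply Subtype.ext
      ext a b
      show f ((Matrix.transvection i j 1 : Matrix (Fin n) (Fin n) k) a b) =
        (Matrix.transvection i j (1 : L)) a b
      simp [Matrix.transvection, Matrix.single, Matrix.one_apply, apply_ite f,
        Matrix.add_apply]
    have htmem : tL ∈ (Matrix.SpecialLinearGroup.map (n := Fin n) f).range := ⟨tk, hmap⟩
    have hconj : g * tL * g⁻¹ ∈ (Matrix.SpecialLinearGroup.map (n := Fin n) f).range :=
      (Subgroup.mem_normalizer_iff.mp hg tL).mp htmem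
    have hentry := hment _ hconj a b
    have hval : ((g * tL * g⁻¹ : Matrix.SpecialLinearGroup (Fin n) L) :
        Matrix (Fin n) (Fin n) L) a b = (1 : Matrix (Fin n) (Fin n) L) a b + G a i * H j b := by
      have : ((g * tL * g⁻¹ : Matrix.SpecialLinearGroup (Fin n) L) :
          Matrix (Fin n) (Fin n) L) = G * Matrix.transvection i j 1 * H := by
        simp [Matrix.SpecialLinearGroup.coe_mul, htL, hGdef, hHdef]
        rfl
      rw [this]
      have hexp : G * Matrix.transvection i j 1 * H
          = 1 + G * Matrix.single i j (1 : L) * H := by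
        rw [Matrix.transvection, mul_add, add_mul, mul_one, hGH]
      rw [hexp, Matrix.add_apply]
      congr 1
      rw [Matrix.mul_apply]
      rw [Finset.sum_eq_single j]
      · rw [Matrix.mul_single_apply_same, mul_one]
      · intro c _ hc
        rw [Matrix.mul_single_apply_of_ne 1 i j a c hc, zero_mul]
      · intro h; exact absurd (Finset.mem_univ j) h
    have h1 : (1 : Matrix (Fin n) (Fin n) L) a b ∈ f.range := by
      by_cases hab : a = b
      · subst hab; rw [Matrix.one_apply_eq]; exact ⟨1, map_one f⟩
      · rw [Matrix.one_apply_ne hab]; exact ⟨0, map_zero f⟩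
    have := sub_mem (hval ▸ hentry) h1
    simpa using this
  -- all products
  have hall : ∀ i j a b : Fin n, G a i * H j b ∈ f.range := by
    intro i j a b
    by_cases hij : i = j
    · subst hij
      obtain ⟨j', hj'⟩ := Fintype.exists_ne_of_one_lt_card (by simp; omega) i
      have key : G a i * H i b = ∑ c, (G a i * H j' c) * (G c j' * H i b) := by
        have : ∑ c, (G a i * H j' c) * (G c j' * H i b)
            = (G a i * H i b) * ∑ c, H j' c * G c j' := by
          rw [Finset.mul_sum]; apply Finset.sum_congr rfl; intro c _; ring
        rw [this]
        have : ∑ c, H j' c * G c j' = (H * G) j' j' := (Matrix.mul_apply).symm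
        rw [this, hHG, Matrix.one_apply_eq, mul_one]
      rw [key]
      exact Subring.sum_mem _ fun c _ =>
        mul_mem (hoff i j' (fun h => hj' h.symm) a c) (hoff j' i hj' c b)
    · exact hoff i j hij a b
  -- pick a nonzero entry of H
  have hi0 : (0 : ℕ) < n := by omega
  have hHne : ∃ j0 b0, H j0 b0 ≠ 0 := by
    by_contra hcon
    push_neg at hcon
    have : (H * G) ⟨0, hi0⟩ ⟨0, hi0⟩ = 0 := by
      rw [Matrix.mul_apply]
      exact Finset.sum_eq_zero fun c _ => by rw [hcon _ c, zero_mul]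
    rw [hHG, Matrix.one_apply_eq] at this
    exact one_ne_zero this
  obtain ⟨j0, b0, hν⟩ := hHne
  set ν : L := H j0 b0 with hνdef
  have hprod : ∀ a i, G a i * ν ∈ f.range := fun a i => hall i j0 a b0
  choose M hM using fun a i => hprod a i
  set Mk : Matrix (Fin n) (Fin n) k := Matrix.of (fun a i => M a i) with hMk
  have hB : f.mapMatrix Mk = ν • G := by
    ext a b
    simp [RingHom.mapMatrix_apply, Matrix.map_apply, hMk, hM, mul_comm]
  have hdet : f Mk.det = ν ^ n := by
    rw [RingHom.map_det, hB, Matrix.det_smul]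
    have : G.det = 1 := g.prop
    simp [this]
  have hdne : Mk.det ≠ 0 := by
    intro h
    rw [h, map_zero] at hdet
    exact pow_ne_zero n hν hdet.symm
  have hpow : f.mapMatrix (Mk ^ n) = (ν ^ n) • G ^ n := by
    rw [map_pow, hB, smul_pow]
  set N : Matrix (Fin n) (Fin n) k := Mk.det⁻¹ • Mk ^ n with hN
  have hGN : G ^ n = f.mapMatrix N := by
    have : f.mapMatrix N = f Mk.det⁻¹ • f.mapMatrix (Mk ^ n) := by
      ext a b
      simp [hN, RingHom.mapMatrix_apply, Matrix.map_apply, Matrix.smul_apply]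
    rw [this, hpow, map_inv₀, hdet, smul_smul,
      inv_mul_cancel₀ (pow_ne_zero n hν), one_smul]
  have hNdet : N.det = 1 := by
    have hfinj : Function.Injective f := f.injective
    apply hfinj
    rw [RingHom.map_det, ← hGN, map_one, Matrix.det_pow]
    have : G.det = 1 := g.prop
    rw [this, one_pow]
  refine ⟨⟨N, hNdet⟩, ?_⟩
  apply Subtype.ext
  rw [Matrix.SpecialLinearGroup.coe_pow]
  exact hGN.symm
end

section
/- Let L/k be an extension of finite fields and let σ ∈ Gal(L/k) be the Frobenius x ↦ x^{|k|}. If g ∈ SL_n(L) normalizes SL_n(k), then σ(g)·g⁻¹ is a scalar matrix λI with λ ∈ μ_n(L), where σ is applied entrywise. -/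
open Matrix Polynomial

/-- Let `L/k` be an extension of finite fields and `σ ∈ Gal(L/k)` the Frobenius
`x ↦ x^{|k|}`. If `g ∈ SL_n(L)` normalizes `SL_n(k)`, then `σ(g)·g⁻¹` (with `σ`
applied entrywise) is a scalar matrix `λ·1` with `λ` an `n`-th root of unity in `L`. -/
theorem stmt_5 (k L : Type) [Field k] [Field L] [Fintype k] [Fintype L]
    (f : k →+* L) (n : ℕ)
    (σ : L →+* L) (hσ : ∀ x : L, σ x = x ^ Fintype.card k)
    (g : Matrix.SpecialLinearGroup (Fin n) L)
    (hg : g ∈ Subgroup.normalizer ((Matrix.SpecialLinearGroup.map (n := Fin n) f).range : Set (Matrix.SpecialLinearGroup (Fin n) L))) :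
    ∃ lam : L, lam ^ n = 1 ∧
      (g.val.map σ) * (g⁻¹).val = lam • (1 : Matrix (Fin n) (Fin n) L) := by
  classical
  set q := Fintype.card k with hqdef
  have hq1 : 1 < q := Fintype.one_lt_card
  -- σ fixes the image of f
  have hσf : ∀ x : k, σ (f x) = f x := fun x => by
    rw [hσ, ← map_pow, FiniteField.pow_card]
  -- fixed points of σ lie in the range of f
  have hfix : ∀ a : L, σ a = a → a ∈ Set.range f := by
    intro a ha
    set p : L[X] := X ^ q - X with hp
    have hdeg : p.natDegree = q := by
      rw [hp]
      rw [Polynomial.natDegree_sub_eq_left_of_natDegree_lt (by simpa using hq1)]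
      simp
    have hp0 : p ≠ 0 := fun h => by simp [h] at hdeg; omega
    set T : Finset L := Finset.univ.image f with hT
    have hTcard : T.card = q := by
      rw [hT, Finset.card_image_of_injective _ f.injective, Finset.card_univ]
    have hTsub : T ⊆ p.roots.toFinset := by
      intro y hy
      simp only [hT, Finset.mem_image] at hy
      obtain ⟨x, -, rfl⟩ := hy
      rw [Multiset.mem_toFinset, Polynomial.mem_roots hp0]
      simp only [hp, Polynomial.IsRoot, Polynomial.eval_sub, Polynomial.eval_pow,
        Polynomial.eval_X]
      rw [← map_pow, FiniteField.pow_card, sub_self]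
    have hTeq : T = p.roots.toFinset := by
      apply Finset.eq_of_subset_of_card_le hTsub
      calc p.roots.toFinset.card ≤ Multiset.card p.roots := Multiset.toFinset_card_le _
        _ ≤ p.natDegree := Polynomial.card_roots' p
        _ = T.card := by rw [hdeg, hTcard]
    have haroot : a ∈ p.roots.toFinset := by
      rw [Multiset.mem_toFinset, Polynomial.mem_roots hp0]
      have : a ^ q = a := by rw [← hσ, ha]
      simp [hp, Polynomial.IsRoot, this]
    rw [← hTeq, hT, Finset.mem_image] at haroot
    obtain ⟨x, -, hx⟩ := haroot
    exact ⟨x, hx⟩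
  -- notation
  set A : Matrix (Fin n) (Fin n) L := g.val with hA
  set B : Matrix (Fin n) (Fin n) L := (g⁻¹).val with hB
  have hAB : A * B = 1 := by
    rw [hA, hB, ← Matrix.SpecialLinearGroup.coe_mul, mul_inv_cancel,
      Matrix.SpecialLinearGroup.coe_one]
  have hBA : B * A = 1 := by
    rw [hA, hB, ← Matrix.SpecialLinearGroup.coe_mul, inv_mul_cancel,
      Matrix.SpecialLinearGroup.coe_one]
  set A' : Matrix (Fin n) (Fin n) L := A.map σ with hA'
  set B' : Matrix (Fin n) (Fin n) L := B.map σ with hB'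
  have hA'B' : A' * B' = 1 := by
    rw [hA', hB', ← Matrix.map_mul, hAB, Matrix.map_one σ (map_zero σ) (map_one σ)]
  have hB'A' : B' * A' = 1 := by
    rw [hA', hB', ← Matrix.map_mul, hBA, Matrix.map_one σ (map_zero σ) (map_one σ)]
  -- the key commutation: u := B * A' commutes with images of SL_n(k)
  set u : Matrix (Fin n) (Fin n) L := B * A' with hu
  have hcomm : ∀ t : Matrix.SpecialLinearGroup (Fin n) k,
      u * ((Matrix.SpecialLinearGroup.map f t).val) =
      ((Matrix.SpecialLinearGroup.map f t).val) * u := by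
    intro t
    set T : Matrix (Fin n) (Fin n) L := (Matrix.SpecialLinearGroup.map f t).val with hTm
    have hTf : ∀ i j, T i j ∈ Set.range f := by
      intro i j
      exact ⟨t.val i j, by rw [hTm, Matrix.SpecialLinearGroup.map_apply_coe]; rfl⟩
    have hTσ : T.map σ = T := by
      ext i j
      obtain ⟨x, hx⟩ := hTf i j
      simp [Matrix.map_apply, ← hx, hσf]
    -- conjugate lies in the range, so its entries are σ-fixed
    have hconj : g * Matrix.SpecialLinearGroup.map f t * g⁻¹ ∈
        (Matrix.SpecialLinearGroup.map (n := Fin n) f).range := by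
      exact (Subgroup.mem_normalizer_iff.mp hg _).mp ⟨t, rfl⟩
    obtain ⟨s, hs⟩ := hconj
    have hsfix : ((g * Matrix.SpecialLinearGroup.map f t * g⁻¹).val).map σ =
        (g * Matrix.SpecialLinearGroup.map f t * g⁻¹).val := by
      rw [← hs]
      ext i j
      have : (Matrix.SpecialLinearGroup.map f s).val i j = f (s.val i j) := by
        rw [Matrix.SpecialLinearGroup.map_apply_coe]; rfl
      simp [Matrix.map_apply, this, hσf]
    have key : A' * T * B' = A * T * B := by
      have h1 : (g * Matrix.SpecialLinearGroup.map f t * g⁻¹).val = A * T * B := by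
        simp [Matrix.SpecialLinearGroup.coe_mul, hA, hB, hTm]
      rw [h1] at hsfix
      rw [← hsfix, Matrix.map_mul, Matrix.map_mul, hTσ, ← hA', ← hB']
    have h2 : A' * T = A * T * B * A' := by
      calc A' * T = A' * T * (B' * A') := by rw [hB'A', mul_one]
        _ = (A' * T * B') * A' := (mul_assoc (A' * T) B' A').symm
        _ = A * T * B * A' := by rw [key]
    calc u * T = B * (A' * T) := by rw [hu, mul_assoc]
      _ = B * (A * T * B * A') := by rw [h2]
      _ = (B * A) * T * (B * A') := by simp only [mul_assoc]
      _ = T * u := by rw [hBA, one_mul, hu]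
  -- u commutes with elementary matrices, hence is scalar
  have hscal : u ∈ Set.range (Matrix.scalar (Fin n)) := by
    apply Matrix.mem_range_scalar_of_commute_single
    intro i j hij
    have ht : ((Matrix.transvection i j (1 : k)).det = 1) :=
      Matrix.det_transvection_of_ne i j hij 1
    set t : Matrix.SpecialLinearGroup (Fin n) k := ⟨Matrix.transvection i j 1, ht⟩ with htdef
    have hmap : (Matrix.SpecialLinearGroup.map f t).val =
        (1 : Matrix (Fin n) (Fin n) L) + Matrix.single i j 1 := by
      rw [Matrix.SpecialLinearGroup.map_apply_coe]
      show (Matrix.transvection i j (1 : k)).map f = _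
      ext a b
      simp [Matrix.transvection, Matrix.map_apply, Matrix.add_apply, Matrix.one_apply,
        Matrix.single, apply_ite f]
    have := hcomm t
    rw [hmap, mul_add, add_mul, mul_one, one_mul] at this
    have h3 : u * Matrix.single i j 1 = Matrix.single i j 1 * u :=
      add_left_cancel this
    exact h3.symm
  obtain ⟨r, hr⟩ := hscal
  have hu_eq : u = r • (1 : Matrix (Fin n) (Fin n) L) := by
    rw [← hr, Matrix.scalar_apply, Matrix.smul_one_eq_diagonal]
  -- conclude
  refine ⟨r, ?_, ?_⟩
  · -- r ^ n = 1 via determinants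
    have hdetA : A.det = 1 := g.2
    have hdetB : B.det = 1 := (g⁻¹).2
    have hdetA' : A'.det = 1 := by
      rw [hA', ← RingHom.mapMatrix_apply, ← RingHom.map_det, hdetA, _root_.map_one]
    have : u.det = 1 := by rw [hu, Matrix.det_mul, hdetB, hdetA', mul_one]
    rw [hu_eq] at this
    rwa [Matrix.det_smul, Matrix.det_one, mul_one, Fintype.card_fin] at this
  · -- σ(g) * g⁻¹ = A * u * B = r • 1
    have h4 : A' * B = A * u * B := by
      rw [hu, ← mul_assoc, hAB, one_mul]
    rw [h4, hu_eq, Matrix.mul_smul, mul_one, Matrix.smul_mul, hAB]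
end
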